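/- arXiv:1502.05648 — 2 statements merged into one kernel-verified Lean document; each statement's English description precedes it below -/
import Mathlib

section
/- Let p' ≥ 1 and p ≥ p'. Let (Ω, F, P) be a probability space and let Ψ : Ω → C_{p'}(Λ) be such that for every (t,x) ∈ Λ the map ω ↦ Ψ(ω)(t,x) is measurable and such that ess sup_{ω∈Ω} |Ψ(ω)|_{C_{p'}(Λ)} < ∞. Then the map [0,T] × L^p(Ω; 𝕎) → ℝ, (s, Y) ↦ E[ Ψ(·)(s, Y(·)) ], is well defined (the integrand is integrable) and jointly continuous, where L^p(Ω; 𝕎) is the Bochner space of p-integrable 𝕎-valued random variables with norm ‖Y‖ = (E[|Y|_∞^p])^{1/p}. In particular, if s_n → s in [0,T] and Y_n → Y in L^p(Ω; 𝕎), then E[Ψ(·)(s_n, Y_n)] → E[Ψ(·)(s, Y)]. -/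
open MeasureTheory
open scoped ENNReal NNReal

/-- The stopped path `x_{·∧t}` of a continuous path `x : [0,T] → H`. -/
noncomputable def stopPath {H : Type*} [TopologicalSpace H] (T : ℝ)
    (t : Set.Icc (0:ℝ) T) (x : C(Set.Icc (0:ℝ) T, H)) : C(Set.Icc (0:ℝ) T, H) :=
  x.comp ⟨fun s => ⟨min s.1 t.1, le_min s.2.1 t.2.1, min_le_of_left_le s.2.2⟩,
    Continuous.subtype_mk (continuous_subtype_val.min continuous_const) _⟩

noncomputable def minMap (T : ℝ) (t : Set.Icc (0:ℝ) T) : C(Set.Icc (0:ℝ) T, Set.Icc (0:ℝ) T) :=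
  ⟨fun s => ⟨min s.1 t.1, le_min s.2.1 t.2.1, min_le_of_left_le s.2.2⟩,
    Continuous.subtype_mk (continuous_subtype_val.min continuous_const) _⟩

theorem continuous_minMap (T : ℝ) : Continuous (minMap T) := by
  refine LipschitzWith.continuous (K := 1) (LipschitzWith.of_dist_le_mul fun t t' => ?_)
  rw [NNReal.coe_one, one_mul]
  refine (ContinuousMap.dist_le dist_nonneg).2 fun s => ?_
  rw [Subtype.dist_eq, Subtype.dist_eq, Real.dist_eq, Real.dist_eq]
  exact (abs_min_sub_min_le_max (s:ℝ) t s t').trans (by simp [abs_nonneg])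

theorem continuous_stopPath {H : Type*} [TopologicalSpace H] (T : ℝ) :
    Continuous fun q : Set.Icc (0:ℝ) T × C(Set.Icc (0:ℝ) T, H) => stopPath T q.1 q.2 :=
  ContinuousMap.continuous_comp'.comp
    ((continuous_minMap T).comp continuous_fst |>.prodMk continuous_snd)

/-- The pseudometric `d_∞` on `Λ = [0,T] × C([0,T];H)`. -/
noncomputable def dInfty {H : Type*} [NormedAddCommGroup H] (T : ℝ)
    (p q : Set.Icc (0:ℝ) T × C(Set.Icc (0:ℝ) T, H)) : ℝ :=
  |p.1.1 - q.1.1| + ‖stopPath T p.1 p.2 - stopPath T q.1 q.2‖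

/-- The topology on `Λ` induced by the pseudometric `d_∞` (generated by the `d_∞`-balls). -/
noncomputable def lambdaTop {H : Type*} [NormedAddCommGroup H] (T : ℝ) :
    TopologicalSpace (Set.Icc (0:ℝ) T × C(Set.Icc (0:ℝ) T, H)) :=
  TopologicalSpace.generateFrom
    {B | ∃ p ε, B = {q | dInfty (H := H) T p q < ε}}

theorem continuous_dInfty {H : Type*} [NormedAddCommGroup H] (T : ℝ)
    (p : Set.Icc (0:ℝ) T × C(Set.Icc (0:ℝ) T, H)) :
    Continuous fun q => dInfty (H := H) T p q := by
  unfold dInfty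
  have h1 : Continuous fun q : Set.Icc (0:ℝ) T × C(Set.Icc (0:ℝ) T, H) => |p.1.1 - q.1.1| :=
    (continuous_const.sub (continuous_subtype_val.comp continuous_fst)).abs
  have h2 : Continuous fun q : Set.Icc (0:ℝ) T × C(Set.Icc (0:ℝ) T, H) =>
      ‖stopPath T p.1 p.2 - stopPath T q.1 q.2‖ :=
    (continuous_const.sub (continuous_stopPath T)).norm
  exact h1.add h2

theorem prod_le_lambdaTop {H : Type*} [NormedAddCommGroup H] (T : ℝ) :
    (instTopologicalSpaceProd : TopologicalSpace (Set.Icc (0:ℝ) T × C(Set.Icc (0:ℝ) T, H)))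
      ≤ lambdaTop (H := H) T := by
  refine le_generateFrom ?_
  rintro B ⟨p, ε, rfl⟩
  exact isOpen_Iio.preimage (continuous_dInfty T p)

theorem continuous_prod_of_lambdaTop {H : Type*} [NormedAddCommGroup H] {T : ℝ}
    {f : (Set.Icc (0:ℝ) T × C(Set.Icc (0:ℝ) T, H)) → ℝ}
    (hf : @Continuous _ _ (lambdaTop T) _ f) : Continuous f := by
  have hid : @Continuous _ _ instTopologicalSpaceProd (lambdaTop (H := H) T) id :=
    continuous_id_iff_le.2 (prod_le_lambdaTop T)
  exact @Continuous.comp _ _ _ instTopologicalSpaceProd (lambdaTop (H := H) T) _ _ _ hf hid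

section Meas
variable {H : Type*} [NormedAddCommGroup H] [InnerProductSpace ℝ H]
    [TopologicalSpace.SeparableSpace H]
    {Ω : Type*} [MeasurableSpace Ω] {T : ℝ}

theorem aestronglyMeasurable_comp (P : Measure Ω)
    (Ψ : Ω → (Set.Icc (0:ℝ) T × C(Set.Icc (0:ℝ) T, H)) → ℝ)
    (hΨcont : ∀ ω, @Continuous _ _ (lambdaTop T) _ (Ψ ω))
    (hΨmeas : ∀ q : Set.Icc (0:ℝ) T × C(Set.Icc (0:ℝ) T, H), Measurable fun ω => Ψ ω q)
    (s : Set.Icc (0:ℝ) T) (Y : Ω → C(Set.Icc (0:ℝ) T, H))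
    (hY : AEStronglyMeasurable Y P) :
    AEStronglyMeasurable (fun ω => Ψ ω (s, Y ω)) P := by
  haveI : SecondCountableTopology H := UniformSpace.secondCountable_of_separable H
  borelize (C(Set.Icc (0:ℝ) T, H))
  haveI : SecondCountableTopology C(Set.Icc (0:ℝ) T, H) := inferInstance
  have hu : StronglyMeasurable
      (Function.uncurry fun (q : Set.Icc (0:ℝ) T × C(Set.Icc (0:ℝ) T, H)) (ω : Ω) => Ψ ω q) :=
    stronglyMeasurable_uncurry_of_continuous_of_stronglyMeasurable
      (fun ω => continuous_prod_of_lambdaTop (hΨcont ω))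
      (fun q => (hΨmeas q).stronglyMeasurable)
  have hmap : AEMeasurable (fun ω => (((s, Y ω) :
      Set.Icc (0:ℝ) T × C(Set.Icc (0:ℝ) T, H)), ω)) P :=
    ((aemeasurable_const.prodMk hY.aemeasurable).prodMk aemeasurable_id)
  exact (hu.measurable.comp_aemeasurable hmap).aestronglyMeasurable

end Meas

section Int
variable {H : Type*} [NormedAddCommGroup H] [InnerProductSpace ℝ H]
    [TopologicalSpace.SeparableSpace H]
    {Ω : Type*} [MeasurableSpace Ω] {T : ℝ}

theorem integrable_norm_rpow_of_memLp (P : Measure Ω) [IsProbabilityMeasure P]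
    {p' p : ℝ} (hp' : 1 ≤ p') (hp : p' ≤ p)
    {Y : Ω → C(Set.Icc (0:ℝ) T, H)} (hY : MemLp Y (ENNReal.ofReal p) P) :
    Integrable (fun ω => ‖Y ω‖ ^ p') P := by
  have h0 : (0:ℝ) < p' := lt_of_lt_of_le one_pos hp'
  have hY' : MemLp Y (ENNReal.ofReal p') P :=
    hY.mono_exponent (ENNReal.ofReal_le_ofReal hp)
  have := hY'.integrable_norm_rpow (by simp [ENNReal.ofReal_pos.2 h0 |>.ne']) ENNReal.ofReal_ne_top
  simpa [ENNReal.toReal_ofReal h0.le] using this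

theorem integrable_comp (P : Measure Ω) [IsProbabilityMeasure P]
    {p' p : ℝ} (hp' : 1 ≤ p') (hp : p' ≤ p)
    (Ψ : Ω → (Set.Icc (0:ℝ) T × C(Set.Icc (0:ℝ) T, H)) → ℝ)
    (hΨcont : ∀ ω, @Continuous _ _ (lambdaTop T) _ (Ψ ω))
    (hΨmeas : ∀ q : Set.Icc (0:ℝ) T × C(Set.Icc (0:ℝ) T, H), Measurable fun ω => Ψ ω q)
    {C : ℝ}
    (hΨbdd : ∀ᵐ ω ∂P, ∀ q : Set.Icc (0:ℝ) T × C(Set.Icc (0:ℝ) T, H),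
      |Ψ ω q| ≤ C * (1 + ‖q.2‖ ^ p'))
    (s : Set.Icc (0:ℝ) T) {Y : Ω → C(Set.Icc (0:ℝ) T, H)}
    (hYm : AEStronglyMeasurable Y P) (hY : MemLp Y (ENNReal.ofReal p) P) :
    Integrable (fun ω => Ψ ω (s, Y ω)) P := by
  have hint : Integrable (fun ω => ‖Y ω‖ ^ p') P :=
    integrable_norm_rpow_of_memLp P hp' hp hY
  refine Integrable.mono' (((integrable_const (1:ℝ)).add hint).const_mul C)
    (aestronglyMeasurable_comp P Ψ hΨcont hΨmeas s Y hYm) ?_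
  filter_upwards [hΨbdd] with ω hω
  simpa [Real.norm_eq_abs, mul_add] using hω (s, Y ω)

end Int

section Conv
variable {H : Type*} [NormedAddCommGroup H] [InnerProductSpace ℝ H]
    [TopologicalSpace.SeparableSpace H]
    {Ω : Type*} [MeasurableSpace Ω] {T : ℝ}

theorem key_tendsto (P : Measure Ω) [IsProbabilityMeasure P]
    {p' p : ℝ} (hp' : 1 ≤ p') (hp : p' ≤ p)
    (Ψ : Ω → (Set.Icc (0:ℝ) T × C(Set.Icc (0:ℝ) T, H)) → ℝ)
    (hΨcont : ∀ ω, @Continuous _ _ (lambdaTop T) _ (Ψ ω))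
    (hΨmeas : ∀ q : Set.Icc (0:ℝ) T × C(Set.Icc (0:ℝ) T, H), Measurable fun ω => Ψ ω q)
    {C : ℝ}
    (hΨbdd : ∀ᵐ ω ∂P, ∀ q : Set.Icc (0:ℝ) T × C(Set.Icc (0:ℝ) T, H),
      |Ψ ω q| ≤ C * (1 + ‖q.2‖ ^ p'))
    {s : Set.Icc (0:ℝ) T} {t : ℕ → Set.Icc (0:ℝ) T} (ht : Filter.Tendsto t Filter.atTop (nhds s))
    {Y : Ω → C(Set.Icc (0:ℝ) T, H)} (hYm : AEStronglyMeasurable Y P)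
    (hY : MemLp Y (ENNReal.ofReal p) P)
    {Z : ℕ → Ω → C(Set.Icc (0:ℝ) T, H)} (hZm : ∀ k, AEStronglyMeasurable (Z k) P)
    (hZ : ∀ k, eLpNorm (fun ω => Z k ω - Y ω) (ENNReal.ofReal p) P ≤ 2⁻¹ ^ k) :
    Filter.Tendsto (fun k => ∫ ω, Ψ ω (t k, Z k ω) ∂P) Filter.atTop
      (nhds (∫ ω, Ψ ω (s, Y ω) ∂P)) := by
  have h0 : (0:ℝ) < p' := one_pos.trans_le hp'
  set q' := ENNReal.ofReal p' with hq'
  have hq'0 : q' ≠ 0 := by simp [hq', ENNReal.ofReal_pos.2 h0 |>.ne']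
  have hq't : q' ≠ ∞ := ENNReal.ofReal_ne_top
  have hq'r : q'.toReal = p' := ENNReal.toReal_ofReal h0.le
  set D : ℕ → Ω → ℝ≥0∞ := fun k ω => (‖Z k ω - Y ω‖₊ : ℝ≥0∞) ^ p' with hD
  have hDmeas : ∀ k, AEMeasurable (D k) P := fun k =>
    (((hZm k).sub hYm).enorm).pow_const p'
  have hDint : ∀ k, ∫⁻ ω, D k ω ∂P ≤ 2⁻¹ ^ k := by
    intro k
    have h1 : ∫⁻ ω, D k ω ∂P = (eLpNorm (fun ω => Z k ω - Y ω) q' P) ^ p' := by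
      rw [eLpNorm_eq_lintegral_rpow_enorm_toReal hq'0 hq't, hq'r, ← ENNReal.rpow_mul,
        one_div, inv_mul_cancel₀ h0.ne', ENNReal.rpow_one]
      rfl
    have h2 : eLpNorm (fun ω => Z k ω - Y ω) q' P
        ≤ eLpNorm (fun ω => Z k ω - Y ω) (ENNReal.ofReal p) P :=
      eLpNorm_le_eLpNorm_of_exponent_le (ENNReal.ofReal_le_ofReal hp) ((hZm k).sub hYm)
    calc ∫⁻ ω, D k ω ∂P = (eLpNorm (fun ω => Z k ω - Y ω) q' P) ^ p' := h1
      _ ≤ ((2:ℝ≥0∞)⁻¹ ^ k) ^ p' := ENNReal.rpow_le_rpow (h2.trans (hZ k)) h0.le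
      _ ≤ (2:ℝ≥0∞)⁻¹ ^ k := by
          rw [← ENNReal.rpow_natCast (2:ℝ≥0∞)⁻¹ k, ← ENNReal.rpow_mul]
          exact ENNReal.rpow_le_rpow_of_exponent_ge (by simp)
            (le_mul_of_one_le_right (Nat.cast_nonneg k) hp')
  set B : Ω → ℝ≥0∞ := fun ω => ∑' k, D k ω with hB
  have hBmeas : AEMeasurable B P := AEMeasurable.ennreal_tsum hDmeas
  have hBlt : ∫⁻ ω, B ω ∂P < ∞ := by
    rw [hB]
    simp only
    rw [lintegral_tsum hDmeas]
    refine lt_of_le_of_lt (ENNReal.tsum_le_tsum hDint) ?_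
    rw [ENNReal.tsum_geometric]
    simp [ENNReal.sub_half]
  have hBae : ∀ᵐ ω ∂P, B ω < ∞ := ae_lt_top' hBmeas hBlt.ne
  set b : Ω → ℝ := fun ω => ((B ω) ^ (1/p')).toReal with hb
  have hbnn : ∀ ω, 0 ≤ b ω := fun ω => ENNReal.toReal_nonneg
  have hbmeas : AEMeasurable b P := (hBmeas.pow_const _).ennreal_toReal
  have hbmem : MemLp b q' P := by
    refine ⟨hbmeas.aestronglyMeasurable, ?_⟩
    rw [eLpNorm_eq_lintegral_rpow_enorm_toReal hq'0 hq't, hq'r]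
    have hcongr : ∀ᵐ ω ∂P, (‖b ω‖₊ : ℝ≥0∞) ^ p' = B ω := by
      filter_upwards [hBae] with ω hω
      have h1 : ((B ω) ^ (1/p')) ≠ ∞ := ENNReal.rpow_ne_top_of_nonneg (by positivity) hω.ne
      have h2 : (‖b ω‖₊ : ℝ≥0∞) = (B ω) ^ (1/p') := by
        rw [hb]
        simp only
        rw [← enorm_eq_nnnorm, Real.enorm_eq_ofReal ENNReal.toReal_nonneg, ENNReal.ofReal_toReal h1]
      rw [h2, ← ENNReal.rpow_mul, one_div, inv_mul_cancel₀ h0.ne', ENNReal.rpow_one]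
    rw [lintegral_congr_ae (f := fun x => ‖b x‖ₑ ^ p') hcongr]
    exact ENNReal.rpow_lt_top_of_nonneg (by positivity) hBlt.ne
  have hYmem' : MemLp Y q' P := hY.mono_exponent (ENNReal.ofReal_le_ofReal hp)
  have hmem2 : MemLp (fun ω => ‖Y ω‖ + b ω) q' P := hYmem'.norm.add hbmem
  have hgint : Integrable (fun ω => (‖Y ω‖ + b ω) ^ p') P := by
    have h1 := hmem2.integrable_norm_rpow hq'0 hq't
    rw [hq'r] at h1
    refine h1.congr (Filter.Eventually.of_forall fun ω => ?_)
    show ‖‖Y ω‖ + b ω‖ ^ p' = (‖Y ω‖ + b ω) ^ p'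
    rw [Real.norm_of_nonneg (add_nonneg (norm_nonneg _) (hbnn ω))]
  have hGint : Integrable (fun ω => |C| * (1 + (‖Y ω‖ + b ω) ^ p')) P :=
    ((integrable_const (1:ℝ)).add hgint).const_mul _
  have hae : ∀ᵐ ω ∂P, (∀ k, ‖Z k ω - Y ω‖ ≤ b ω) ∧
      Filter.Tendsto (fun k => Z k ω) Filter.atTop (nhds (Y ω)) := by
    filter_upwards [hBae] with ω hω
    have hle : ∀ k, ‖Z k ω - Y ω‖ ≤ b ω := by
      intro k
      have h1 : D k ω ≤ B ω := ENNReal.le_tsum k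
      have h2 : (‖Z k ω - Y ω‖₊ : ℝ≥0∞) ≤ (B ω) ^ (1/p') := by
        have h3 := ENNReal.rpow_le_rpow h1 (by positivity : (0:ℝ) ≤ 1/p')
        rwa [hD, ← ENNReal.rpow_mul, mul_one_div, div_self h0.ne', ENNReal.rpow_one] at h3
      have h4 : ‖Z k ω - Y ω‖ = ((‖Z k ω - Y ω‖₊ : ℝ≥0∞)).toReal := by simp
      rw [h4, hb]
      exact ENNReal.toReal_mono (ENNReal.rpow_ne_top_of_nonneg (by positivity) hω.ne) h2
    refine ⟨hle, ?_⟩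
    have h3 : Filter.Tendsto (fun k => D k ω) Filter.atTop (nhds 0) := by
      refine ENNReal.tendsto_atTop_zero_of_tsum_ne_top ?_
      exact hω.ne
    have h4 : Filter.Tendsto (fun k => (‖Z k ω - Y ω‖₊ : ℝ≥0∞)) Filter.atTop (nhds 0) := by
      have hcont : Continuous fun x : ℝ≥0∞ => x ^ (1/p') := ENNReal.continuous_rpow_const
      have h5 := (hcont.tendsto 0).comp h3
      rw [ENNReal.zero_rpow_of_pos (by positivity)] at h5
      have h6 : ∀ k, ((D k ω) ^ (1/p')) = (‖Z k ω - Y ω‖₊ : ℝ≥0∞) := by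
        intro k
        rw [hD, ← ENNReal.rpow_mul, mul_one_div, div_self h0.ne', ENNReal.rpow_one]
      exact h5.congr h6
    have h7 : Filter.Tendsto (fun k => ‖Z k ω - Y ω‖) Filter.atTop (nhds 0) := by
      have h8 := (ENNReal.tendsto_toReal (by simp : (0:ℝ≥0∞) ≠ ∞)).comp h4
      simpa [Function.comp_def] using h8
    rw [tendsto_iff_norm_sub_tendsto_zero]
    simpa using h7
  refine tendsto_integral_of_dominated_convergence _
    (fun k => aestronglyMeasurable_comp P Ψ hΨcont hΨmeas (t k) (Z k) (hZm k)) hGint ?_ ?_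
  · intro k
    filter_upwards [hΨbdd, hae] with ω h1 h2
    have hZle : ‖Z k ω‖ ≤ ‖Y ω‖ + b ω := by
      have h3 := norm_sub_norm_le (Z k ω) (Y ω)
      linarith [h2.1 k]
    have h3 : ‖Z k ω‖ ^ p' ≤ (‖Y ω‖ + b ω) ^ p' :=
      Real.rpow_le_rpow (norm_nonneg _) hZle h0.le
    have h4 : (0:ℝ) ≤ 1 + ‖Z k ω‖ ^ p' := by positivity
    calc ‖Ψ ω (t k, Z k ω)‖ = |Ψ ω (t k, Z k ω)| := rfl
      _ ≤ C * (1 + ‖Z k ω‖ ^ p') := h1 _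
      _ ≤ |C| * (1 + ‖Z k ω‖ ^ p') := mul_le_mul_of_nonneg_right (le_abs_self C) h4
      _ ≤ |C| * (1 + (‖Y ω‖ + b ω) ^ p') :=
          mul_le_mul_of_nonneg_left (by linarith) (abs_nonneg C)
  · filter_upwards [hae] with ω h2
    exact ((continuous_prod_of_lambdaTop (hΨcont ω)).tendsto _).comp (ht.prodMk_nhds h2.2)

end Conv


/-- If `Ψ : Ω → C_{p'}(Λ)` is pointwise measurable in `ω`, with essentially bounded
`C_{p'}(Λ)`-norm, and `p ≥ p' ≥ 1`, then the map
`[0,T] × L^p(Ω;𝕎) → ℝ, (s,Y) ↦ E[Ψ(·)(s,Y(·))]` is well defined and jointly continuous. -/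
theorem stmt7 {H : Type*} [NormedAddCommGroup H] [InnerProductSpace ℝ H]
    [CompleteSpace H] [TopologicalSpace.SeparableSpace H]
    {Ω : Type*} [MeasurableSpace Ω] (P : Measure Ω) [IsProbabilityMeasure P]
    (T : ℝ) (hT : 0 ≤ T) (p' p : ℝ) (hp' : 1 ≤ p') (hp : p' ≤ p)
    [Fact ((1:ENNReal) ≤ ENNReal.ofReal p)]
    (Ψ : Ω → (Set.Icc (0:ℝ) T × C(Set.Icc (0:ℝ) T, H)) → ℝ)
    (hΨcont : ∀ ω, @Continuous _ _ (lambdaTop T) _ (Ψ ω))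
    (hΨmeas : ∀ q : Set.Icc (0:ℝ) T × C(Set.Icc (0:ℝ) T, H),
      Measurable fun ω => Ψ ω q)
    (C : ℝ)
    (hΨbdd : ∀ᵐ ω ∂P, ∀ q : Set.Icc (0:ℝ) T × C(Set.Icc (0:ℝ) T, H),
      |Ψ ω q| ≤ C * (1 + ‖q.2‖ ^ p')) :
    (∀ (s : Set.Icc (0:ℝ) T)
        (Y : Lp (C(Set.Icc (0:ℝ) T, H)) (ENNReal.ofReal p) P),
      Integrable (fun ω => Ψ ω (s, Y ω)) P) ∧
    Continuous (fun sY : Set.Icc (0:ℝ) T ×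
        Lp (C(Set.Icc (0:ℝ) T, H)) (ENNReal.ofReal p) P =>
      ∫ ω, Ψ ω (sY.1, sY.2 ω) ∂P) := by
  constructor
  · intro s Y
    exact integrable_comp P hp' hp Ψ hΨcont hΨmeas hΨbdd s
      (Lp.aestronglyMeasurable Y) (Lp.memLp Y)
  · set_option synthInstance.maxHeartbeats 1000000 in
    set_option maxHeartbeats 1000000 in
    rw [continuous_iff_seqContinuous]
    rintro u ⟨s, Y⟩ hu
    refine Filter.tendsto_of_subseq_tendsto fun ns hns => ?_
    have hu' : Filter.Tendsto (fun n => u (ns n)) Filter.atTop (nhds (s, Y)) := hu.comp hns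
    have hsnd : Filter.Tendsto (fun n => (u (ns n)).2) Filter.atTop (nhds Y) :=
      (continuous_snd.tendsto _).comp hu'
    have hex : ∀ k : ℕ, ∃ N, ∀ n ≥ N, edist ((u (ns n)).2) Y ≤ (2:ℝ≥0∞)⁻¹ ^ k := by
      intro k
      have hε : (0:ℝ≥0∞) < 2⁻¹ ^ k := ENNReal.pow_pos (by simp) k
      obtain ⟨N, hN⟩ := EMetric.tendsto_atTop.1 hsnd _ hε
      exact ⟨N, fun n hn => (hN n hn).le⟩
    obtain ⟨φ, hφmono, hφ⟩ := Filter.extraction_forall_of_eventually' hex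
    refine ⟨φ, ?_⟩
    have htfst : Filter.Tendsto (fun k => (u (ns (φ k))).1) Filter.atTop (nhds s) :=
      (continuous_fst.tendsto _).comp (hu'.comp (hφmono.tendsto_atTop))
    refine key_tendsto P hp' hp Ψ hΨcont hΨmeas hΨbdd htfst
      (Lp.aestronglyMeasurable Y) (Lp.memLp Y)
      (fun k => Lp.aestronglyMeasurable _) (fun k => ?_)
    have h1 : eLpNorm (⇑((u (ns (φ k))).2) - ⇑Y) (ENNReal.ofReal p) P
        = edist ((u (ns (φ k))).2) Y := (Lp.edist_def _ _).symm
    calc eLpNorm (fun ω => ((u (ns (φ k))).2 : Lp _ _ P) ω - Y ω) (ENNReal.ofReal p) P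
        = edist ((u (ns (φ k))).2) Y := h1
      _ ≤ (2:ℝ≥0∞)⁻¹ ^ k := hφ k
end

section
/- Let p ≥ 1 and let (Ω, F, P) be a probability space. Let {u_n}_{n∈ℕ} be a sequence in C_p(Λ) with sup_n |u_n|_{C_p(Λ)} < ∞ and let u ∈ C_p(Λ) be such that, for each s ∈ [0,T], u_n(s,·) → u(s,·) uniformly on compact subsets of 𝕎. Let X_n, X : Ω → 𝕎 be strongly measurable with E[|X_n|_∞^p] < ∞, E[|X|_∞^p] < ∞, and X_n → X in L^p(Ω; 𝕎). Then, for every s ∈ [0,T], E[u_n(s, X_n)] → E[u(s, X)] as n → ∞. -/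
open MeasureTheory Filter

lemma continuous_stopPath_s12 {H : Type*} [NormedAddCommGroup H] (T : ℝ) (s : Set.Icc (0:ℝ) T) :
    Continuous (stopPath (H := H) T s) := by
  unfold stopPath
  exact ContinuousMap.continuous_precomp _

lemma continuous_section {H : Type*} [NormedAddCommGroup H] (T : ℝ) (s : Set.Icc (0:ℝ) T) :
    @Continuous C(Set.Icc (0:ℝ) T, H) (Set.Icc (0:ℝ) T × C(Set.Icc (0:ℝ) T, H)) _
      (lambdaTop T) (fun x => (s, x)) := by
  rw [lambdaTop, continuous_generateFrom_iff]
  rintro B ⟨q, ε, rfl⟩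
  have hc : Continuous fun x : C(Set.Icc (0:ℝ) T, H) => dInfty T q (s, x) := by
    have h1 : Continuous fun x : C(Set.Icc (0:ℝ) T, H) =>
        stopPath T q.1 q.2 - stopPath T s x :=
      continuous_const.sub (continuous_stopPath_s12 T s)
    simp only [dInfty]
    exact continuous_const.add h1.norm
  exact isOpen_Iio.preimage hc

lemma my_add_rpow (p a b : ℝ) (hp : 0 ≤ p) (ha : 0 ≤ a) (hb : 0 ≤ b) :
    (a + b) ^ p ≤ 2 ^ p * (a ^ p + b ^ p) := by
  have h1 : a + b ≤ 2 * max a b := by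
    rcases le_total a b with h | h <;> simp [max_eq_right, max_eq_left, h] <;> linarith
  calc (a + b) ^ p ≤ (2 * max a b) ^ p :=
        Real.rpow_le_rpow (by positivity) h1 hp
    _ = 2 ^ p * (max a b) ^ p := Real.mul_rpow (by norm_num) (le_max_of_le_left ha)
    _ ≤ 2 ^ p * (a ^ p + b ^ p) := by
        rcases le_total a b with h | h
        · rw [max_eq_right h]
          have : (0:ℝ) ≤ a ^ p := Real.rpow_nonneg ha p
          nlinarith [Real.rpow_nonneg (le_trans ha h) p, Real.rpow_nonneg (by norm_num : (0:ℝ) ≤ 2) p]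
        · rw [max_eq_left h]
          have : (0:ℝ) ≤ b ^ p := Real.rpow_nonneg hb p
          nlinarith [Real.rpow_nonneg ha p, Real.rpow_nonneg (by norm_num : (0:ℝ) ≤ 2) p]

/-- Stability of expectations: if `u_n ∈ C_p(Λ)` with `sup_n |u_n|_{C_p} < ∞`,
`u_n(s,·) → u(s,·)` uniformly on compact subsets of `𝕎`, and `X_n → X` in `L^p(Ω;𝕎)`,
then `E[u_n(s, X_n)] → E[u(s, X)]` for every `s ∈ [0,T]`. -/
theorem stmt12 {H : Type*} [NormedAddCommGroup H] [InnerProductSpace ℝ H]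
    [CompleteSpace H] [TopologicalSpace.SeparableSpace H]
    {Ω : Type*} [MeasurableSpace Ω] (P : Measure Ω) [IsProbabilityMeasure P]
    (T : ℝ) (hT : 0 ≤ T) (p : ℝ) (hp : 1 ≤ p)
    (u : ℕ → (Set.Icc (0:ℝ) T × C(Set.Icc (0:ℝ) T, H)) → ℝ)
    (ulim : (Set.Icc (0:ℝ) T × C(Set.Icc (0:ℝ) T, H)) → ℝ)
    (hucont : ∀ n, @Continuous _ _ (lambdaTop T) _ (u n))
    (hulimcont : @Continuous _ _ (lambdaTop T) _ ulim)
    (C : ℝ) (hub : ∀ n, ∀ q : Set.Icc (0:ℝ) T × C(Set.Icc (0:ℝ) T, H),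
      |u n q| ≤ C * (1 + ‖q.2‖ ^ p))
    (Cl : ℝ) (hulimb : ∀ q : Set.Icc (0:ℝ) T × C(Set.Icc (0:ℝ) T, H),
      |ulim q| ≤ Cl * (1 + ‖q.2‖ ^ p))
    (hconv : ∀ (s : Set.Icc (0:ℝ) T) (K : Set C(Set.Icc (0:ℝ) T, H)), IsCompact K →
      TendstoUniformlyOn (fun n x => u n (s, x)) (fun x => ulim (s, x)) atTop K)
    (X : ℕ → Ω → C(Set.Icc (0:ℝ) T, H)) (Xlim : Ω → C(Set.Icc (0:ℝ) T, H))
    (hXm : ∀ n, StronglyMeasurable (X n)) (hXlimm : StronglyMeasurable Xlim)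
    (hXint : ∀ n, Integrable (fun ω => ‖X n ω‖ ^ p) P)
    (hXlimint : Integrable (fun ω => ‖Xlim ω‖ ^ p) P)
    (hXconv : Tendsto (fun n => ∫ ω, ‖X n ω - Xlim ω‖ ^ p ∂P) atTop (nhds 0)) :
    ∀ s : Set.Icc (0:ℝ) T,
      Tendsto (fun n => ∫ ω, u n (s, X n ω) ∂P) atTop
        (nhds (∫ ω, ulim (s, Xlim ω) ∂P)) := by
  intro s
  have hp0 : (0:ℝ) < p := lt_of_lt_of_le zero_lt_one hp
  -- sections are continuous in the sup-norm topology
  have hsec : ∀ v : (Set.Icc (0:ℝ) T × C(Set.Icc (0:ℝ) T, H)) → ℝ,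
      @Continuous _ _ (lambdaTop T) _ v → Continuous (fun x : C(Set.Icc (0:ℝ) T, H) => v (s, x)) :=
    fun v hv => @Continuous.comp _ _ _ _ (lambdaTop T) _ _ _ hv (continuous_section T s)
  -- measurability of the integrands
  have hmeas : ∀ n, AEStronglyMeasurable (fun ω => u n (s, X n ω)) P := fun n =>
    ((hsec (u n) (hucont n)).comp_stronglyMeasurable (hXm n)).aestronglyMeasurable
  -- C is nonnegative
  have hC : 0 ≤ C := by
    have h0 := hub 0 (⟨0, le_refl 0, hT⟩, 0)
    have h1 : (0:ℝ) ≤ C * (1 + ‖(0 : C(Set.Icc (0:ℝ) T, H))‖ ^ p) :=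
      le_trans (abs_nonneg _) h0
    rw [norm_zero, Real.zero_rpow (ne_of_gt hp0)] at h1
    linarith
  -- subsequence principle
  refine tendsto_of_subseq_tendsto fun ns hns => ?_
  -- extract a subsequence with summable L^p errors
  have hev : ∀ j : ℕ, ∀ᶠ k in atTop, ∫ ω, ‖X (ns k) ω - Xlim ω‖ ^ p ∂P ≤ (1/2) ^ j := by
    intro j
    have h2 : Tendsto (fun k => ∫ ω, ‖X (ns k) ω - Xlim ω‖ ^ p ∂P) atTop (nhds 0) :=
      hXconv.comp hns
    have hpos : (0:ℝ) < (1/2) ^ j := by positivity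
    exact (h2.eventually_lt_const hpos).mono fun k hk => le_of_lt hk
  obtain ⟨ms, hms_mono, hms⟩ := extraction_forall_of_eventually hev
  set φ : ℕ → ℕ := fun k => ns (ms k) with hφdef
  have hφ : Tendsto φ atTop atTop := hns.comp hms_mono.tendsto_atTop
  refine ⟨ms, ?_⟩
  -- notation
  set g : ℕ → Ω → ℝ := fun k ω => ‖X (φ k) ω - Xlim ω‖ with hgdef
  have hgnn : ∀ k ω, 0 ≤ g k ω := fun k ω => norm_nonneg _
  have hgm : ∀ k, Measurable fun ω => g k ω ^ p := fun k =>
    ((Real.continuous_rpow_const (le_of_lt hp0)).comp_stronglyMeasurable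
      (((hXm (φ k)).sub hXlimm).norm)).measurable
  have hgint : ∀ k, Integrable (fun ω => g k ω ^ p) P := by
    intro k
    refine Integrable.mono' (((hXint (φ k)).add hXlimint).const_mul (2 ^ p))
      (hgm k).aestronglyMeasurable (ae_of_all _ fun ω => ?_)
    rw [Real.norm_eq_abs, abs_of_nonneg (Real.rpow_nonneg (hgnn k ω) _)]
    calc g k ω ^ p ≤ (‖X (φ k) ω‖ + ‖Xlim ω‖) ^ p :=
          Real.rpow_le_rpow (hgnn k ω) (norm_sub_le _ _) (le_of_lt hp0)
      _ ≤ 2 ^ p * (‖X (φ k) ω‖ ^ p + ‖Xlim ω‖ ^ p) :=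
          my_add_rpow p _ _ (le_of_lt hp0) (norm_nonneg _) (norm_nonneg _)
  set F : ℕ → Ω → ENNReal := fun k ω => ENNReal.ofReal (g k ω ^ p) with hFdef
  have hFm : ∀ k, Measurable (F k) := fun k => (hgm k).ennreal_ofReal
  have hFk : ∀ k, ∫⁻ ω, F k ω ∂P = ENNReal.ofReal (∫ ω, g k ω ^ p ∂P) := fun k =>
    (ofReal_integral_eq_lintegral_ofReal (hgint k)
      (ae_of_all _ fun ω => Real.rpow_nonneg (hgnn k ω) _)).symm
  have hSm : Measurable fun ω => ∑' k, F k ω := Measurable.ennreal_tsum hFm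
  have hSlt : ∫⁻ ω, ∑' k, F k ω ∂P ≠ ⊤ := by
    rw [lintegral_tsum fun k => (hFm k).aemeasurable]
    have hle : ∑' k, ∫⁻ ω, F k ω ∂P ≤ ENNReal.ofReal (∑' k : ℕ, (1/2 : ℝ) ^ k) := by
      rw [ENNReal.ofReal_tsum_of_nonneg (fun k => by positivity) summable_geometric_two]
      exact ENNReal.tsum_le_tsum fun k => by
        rw [hFk k]; exact ENNReal.ofReal_le_ofReal (hms k)
    exact ne_of_lt (lt_of_le_of_lt hle ENNReal.ofReal_lt_top)
  have hae : ∀ᵐ ω ∂P, ∑' k, F k ω < ⊤ := ae_lt_top hSm hSlt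
  set Sr : Ω → ℝ := fun ω => (∑' k, F k ω).toReal with hSrdef
  have hSrint : Integrable Sr P :=
    integrable_toReal_of_lintegral_ne_top hSm.aemeasurable hSlt
  -- the dominating function
  set B : Ω → ℝ := fun ω => C * (1 + 2 ^ p * (‖Xlim ω‖ ^ p + Sr ω)) with hBdef
  have hBint : Integrable B P := by
    have h1 : Integrable (fun ω => 2 ^ p * (‖Xlim ω‖ ^ p + Sr ω)) P :=
      (hXlimint.add hSrint).const_mul _
    exact ((integrable_const (1:ℝ)).add h1).const_mul C
  -- pointwise domination
  have h_bound : ∀ k, ∀ᵐ ω ∂P, ‖u (φ k) (s, X (φ k) ω)‖ ≤ B ω := by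
    intro k
    filter_upwards [hae] with ω hω
    rw [Real.norm_eq_abs]
    refine (hub (φ k) (s, X (φ k) ω)).trans ?_
    have hXle : ‖X (φ k) ω‖ ≤ ‖Xlim ω‖ + g k ω := by
      simpa [hgdef] using norm_add_le (Xlim ω) (X (φ k) ω - Xlim ω)
    have hgS : g k ω ^ p ≤ Sr ω := by
      have h1 : F k ω ≤ ∑' j, F j ω := ENNReal.le_tsum k
      have h2 := ENNReal.toReal_mono (ne_of_lt hω) h1
      rwa [hFdef, ENNReal.toReal_ofReal (Real.rpow_nonneg (hgnn k ω) _)] at h2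
    have hXp : ‖X (φ k) ω‖ ^ p ≤ 2 ^ p * (‖Xlim ω‖ ^ p + Sr ω) := by
      calc ‖X (φ k) ω‖ ^ p ≤ (‖Xlim ω‖ + g k ω) ^ p :=
            Real.rpow_le_rpow (norm_nonneg _) hXle (le_of_lt hp0)
        _ ≤ 2 ^ p * (‖Xlim ω‖ ^ p + g k ω ^ p) :=
            my_add_rpow p _ _ (le_of_lt hp0) (norm_nonneg _) (hgnn k ω)
        _ ≤ 2 ^ p * (‖Xlim ω‖ ^ p + Sr ω) := by
            have h2p : (0:ℝ) ≤ 2 ^ p := Real.rpow_nonneg (by norm_num) p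
            nlinarith
    have := mul_le_mul_of_nonneg_left (add_le_add (le_refl 1) hXp) hC
    simpa [hBdef] using this
  -- a.e. pointwise convergence
  have h_lim : ∀ᵐ ω ∂P, Tendsto (fun k => u (φ k) (s, X (φ k) ω)) atTop
      (nhds (ulim (s, Xlim ω))) := by
    filter_upwards [hae] with ω hω
    -- g k ω ^ p → 0
    have hF0 : Tendsto (fun k => F k ω) atTop (nhds 0) :=
      ENNReal.tendsto_atTop_zero_of_tsum_ne_top (ne_of_lt hω)
    have hb0 : Tendsto (fun k => g k ω ^ p) atTop (nhds 0) := by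
      have h1 := (ENNReal.tendsto_toReal (by simp : (0:ENNReal) ≠ ⊤)).comp hF0
      refine h1.congr fun k => ?_
      exact ENNReal.toReal_ofReal (Real.rpow_nonneg (hgnn k ω) _)
    -- g k ω → 0
    have hg0 : Tendsto (fun k => g k ω) atTop (nhds 0) := by
      have heq : (fun k => g k ω) = fun k => (g k ω ^ p) ^ p⁻¹ := funext fun k =>
        (Real.rpow_rpow_inv (hgnn k ω) (ne_of_gt hp0)).symm
      rw [heq]
      have hcont := (Real.continuousAt_rpow_const 0 p⁻¹
        (Or.inr (by positivity))).tendsto.comp hb0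
      simpa [Function.comp_def, Real.zero_rpow (inv_ne_zero (ne_of_gt hp0))] using hcont
    -- X (φ k) ω → Xlim ω in 𝕎
    have hXk : Tendsto (fun k => X (φ k) ω) atTop (nhds (Xlim ω)) :=
      tendsto_iff_norm_sub_tendsto_zero.2 hg0
    set K : Set C(Set.Icc (0:ℝ) T, H) :=
      insert (Xlim ω) (Set.range fun k => X (φ k) ω) with hKdef
    have hK : IsCompact K := hXk.isCompact_insert_range
    have hU := hconv s K hK
    rw [Metric.tendstoUniformlyOn_iff] at hU
    have h1 : Tendsto (fun k => ulim (s, X (φ k) ω)) atTop (nhds (ulim (s, Xlim ω))) :=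
      ((hsec ulim hulimcont).tendsto (Xlim ω)).comp hXk
    have h2 : Tendsto (fun k => u (φ k) (s, X (φ k) ω) - ulim (s, X (φ k) ω)) atTop
        (nhds 0) := by
      rw [NormedAddCommGroup.tendsto_nhds_zero]
      intro ε hε
      filter_upwards [hφ.eventually (hU ε hε)] with k hk
      have h3 := hk (X (φ k) ω) (Set.mem_insert_of_mem _ ⟨k, rfl⟩)
      rw [Real.dist_eq] at h3
      rw [Real.norm_eq_abs, abs_sub_comm]
      exact h3
    have h4 := h2.add h1
    rw [zero_add] at h4
    convert h4 using 2 with k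
    ring
  exact MeasureTheory.tendsto_integral_of_dominated_convergence B
    (fun k => hmeas (φ k)) hBint h_bound h_lim
end
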